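/- On ℂ[x], with Δ, ∇, x̂, H = −x̂∘∇ as in the discrete setting, R ∈ ℂ[X] of degree d, G = R(H)∘Δ, q ∈ ℂ[X] with q(0) = 0 and deg q = l ≥ 1, and P_n^q = e^{q(G)}((x)_n) (with the convention P_m^q = 0 for m < 0): the polynomials P_n^q satisfy a finite-term recurrence relation; namely for every n ∈ ℕ there exist complex constants γ_0(n), …, γ_m(n), independent of x, such that x·P_n^q = P_{n+1}^q + Σ_{j=0}^{m} γ_j(n)·P_{n−j}^q, where m = ld + l − 1 when d ≥ 1 and m = l when d = 0. -/

import Mathlib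

open Polynomial Finset

noncomputable section

/-- `E` is the ℂ-algebra of ℂ-linear endomorphisms of `ℂ[x]`. -/
abbrev E := Module.End ℂ (Polynomial ℂ)

/-- `D`: the shift `p(x) ↦ p(x+1)`. -/
def Dop : E := (aeval (X + 1 : Polynomial ℂ)).toLinearMap

/-- `D⁻¹`: the shift `p(x) ↦ p(x−1)`. -/
def Dinv : E := (aeval (X - 1 : Polynomial ℂ)).toLinearMap

/-- `Δ = D − 1`. -/
def Del : E := Dop - 1

/-- `∇ = D⁻¹ − 1`. -/
def Nab : E := Dinv - 1

/-- `x̂`: multiplication by `x`. -/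
def Xop : E := LinearMap.mulLeft ℂ (X : Polynomial ℂ)

/-- `H = −x̂∘∇`. -/
def Hd : E := -(Xop * Nab)

/-- `G = R(H)∘Δ`. -/
def Gd (R : Polynomial ℂ) : E := aeval Hd R * Del

/-- `P_n^q = e^{q(G)}((x)_n)`, the exponential series being a finite sum
(all terms with `j > n` vanish). -/
def Pqd (R q : Polynomial ℂ) (n : ℕ) : Polynomial ℂ :=
  ∑ j ∈ range (n + 1), (j.factorial : ℂ)⁻¹ • ((aeval (Gd R) q) ^ j) (descPochhammer ℂ n)

/-- `P_m^q` extended to integer indices by `P_m^q = 0` for `m < 0`. -/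
def Pqdz (R q : Polynomial ℂ) (m : ℤ) : Polynomial ℂ :=
  if m < 0 then 0 else Pqd R q m.toNat

namespace Rec

abbrev e (n : ℕ) : Polynomial ℂ := descPochhammer ℂ n

lemma aeval_poly (p u : Polynomial ℂ) : (aeval (u : Polynomial ℂ)) p = p.comp u := by
  simp [aeval_def, eval₂_eq_eval_map, comp, eval₂_eq_eval_map]

lemma Dop_apply (p : Polynomial ℂ) : Dop p = p.comp (X + 1) := by
  simp [Dop, aeval_poly]

lemma Dinv_apply (p : Polynomial ℂ) : Dinv p = p.comp (X - 1) := by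
  simp [Dinv, aeval_poly]

lemma Del_apply (p : Polynomial ℂ) : Del p = p.comp (X + 1) - p := by
  simp [Del, Dop_apply, LinearMap.sub_apply]

lemma Nab_apply (p : Polynomial ℂ) : Nab p = p.comp (X - 1) - p := by
  simp [Nab, Dinv_apply, LinearMap.sub_apply]

lemma Xop_apply (p : Polynomial ℂ) : Xop p = X * p := rfl

lemma Hd_apply (p : Polynomial ℂ) : Hd p = -(X * (p.comp (X - 1) - p)) := by
  simp [Hd, LinearMap.neg_apply, Module.End.mul_apply, Nab_apply, Xop_apply]

lemma X_mul_e (n : ℕ) : X * e n = e (n + 1) + (n : ℂ) • e n := by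
  simp only [e]
  rw [descPochhammer_succ_right]
  simp [mul_sub, smul_eq_C_mul]
  ring

lemma Xop_e (n : ℕ) : Xop (e n) = e (n + 1) + (n : ℂ) • e n := by
  rw [Xop_apply, X_mul_e]

lemma e_comp_sub_one (n : ℕ) : X * (e n).comp (X - 1) = e (n + 1) := by
  simp only [e]
  rw [descPochhammer_succ_left]

lemma Del_e_zero : Del (e 0) = 0 := by
  simp [Del_apply]

lemma Del_e (n : ℕ) : Del (e (n + 1)) = ((n : ℂ) + 1) • e n := by
  rw [Del_apply]
  simp only [e]
  have h1 : (e (n+1)).comp (X + 1) = (X + 1) * e n := by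
    simp only [e]
    rw [descPochhammer_succ_left, mul_comp, X_comp, comp_assoc, sub_comp, X_comp, one_comp]
    simp
  rw [h1, descPochhammer_succ_right]
  rw [smul_eq_C_mul]
  simp only [C_add, C_1, C_eq_natCast]
  ring

lemma Hd_e (n : ℕ) : Hd (e n) = (n : ℂ) • e n := by
  rw [Hd_apply, mul_sub, e_comp_sub_one, X_mul_e]
  simp

lemma aevalHd_e (f : Polynomial ℂ) (n : ℕ) : (aeval Hd f) (e n) = f.eval (n : ℂ) • e n := by
  induction f using Polynomial.induction_on' with
  | add p q hp hq => rw [map_add, LinearMap.add_apply, hp, hq, eval_add, add_smul]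
  | monomial k a =>
      rw [aeval_monomial]
      have hpow : ∀ m : ℕ, (Hd ^ m) (e n) = ((n : ℂ) ^ m) • e n := by
        intro m
        induction m with
        | zero => simp
        | succ m ih =>
            rw [pow_succ, Module.End.mul_apply, Hd_e, map_smul, ih, smul_smul, pow_succ]
            ring_nf
      rw [Module.End.mul_apply, hpow, map_smul, Module.algebraMap_end_apply, eval_monomial,
        smul_smul, mul_comm]


/-- two endomorphisms agreeing on all descPochhammer polynomials are equal -/
lemma ext_desc {T U : Module.End ℂ (Polynomial ℂ)} (h : ∀ n, T (e n) = U (e n)) : T = U := by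
  apply LinearMap.ext
  intro p
  have key : ∀ N : ℕ, ∀ p : Polynomial ℂ, p.natDegree ≤ N → T p = U p := by
    intro N
    induction N with
    | zero =>
        intro p hp
        have : p = p.coeff 0 • e 0 := by
          simp only [e, descPochhammer_zero, smul_eq_C_mul, mul_one]
          exact (Polynomial.eq_C_of_natDegree_le_zero hp).trans rfl
        rw [this, map_smul, map_smul, h]
    | succ N ih =>
        intro p hp
        set c := p.coeff (N + 1)
        have hdesc : (e (N + 1)).natDegree = N + 1 := descPochhammer_natDegree ℂ (N+1)
        have hmon : (e (N + 1)).coeff (N + 1) = 1 := by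
          have := monic_descPochhammer ℂ (N + 1)
          rw [Monic, leadingCoeff, hdesc] at this
          exact this
        have hr : (p - c • e (N + 1)).natDegree ≤ N := by
          apply natDegree_le_iff_coeff_eq_zero.mpr
          intro m hm
          rw [coeff_sub, coeff_smul, smul_eq_mul]
          rcases eq_or_lt_of_le (Nat.succ_le_of_lt hm) with h1 | h1
          · rw [← h1, hmon, mul_one, sub_self]
          · rw [coeff_eq_zero_of_natDegree_lt (lt_of_le_of_lt hp h1),
              coeff_eq_zero_of_natDegree_lt (by rw [hdesc]; exact h1), mul_zero, sub_self]
        have := ih _ hr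
        have h2 : T (c • e (N+1)) = U (c • e (N+1)) := by rw [map_smul, map_smul, h]
        have hsplit : p = (p - c • e (N+1)) + c • e (N+1) := by ring
        rw [hsplit, map_add, map_add, this, h2]
  exact key p.natDegree p le_rfl

variable (R : Polynomial ℂ)

def V : Polynomial ℂ := X * R.comp (X - C 1)

def W : ℕ → Polynomial ℂ
  | 0 => 1
  | s + 1 => V R * (W s).comp (X - C 1)

lemma V_eval (x : ℂ) : (V R).eval x = x * R.eval (x - 1) := by
  simp [V, eval_comp]

lemma Gd_e_zero : Gd R (e 0) = 0 := by
  rw [Gd, Module.End.mul_apply, Del_e_zero, map_zero]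

lemma Gd_e_succ (ν : ℕ) : Gd R (e (ν + 1)) = (V R).eval ((ν : ℂ) + 1) • e ν := by
  rw [Gd, Module.End.mul_apply, Del_e, map_smul, aevalHd_e, V_eval, smul_smul]
  ring_nf

lemma Gpow_zero' : ∀ s n, n < s → ((Gd R) ^ s) (e n) = 0 := by
  intro s
  induction s with
  | zero => omega
  | succ s ih =>
      intro n hn
      rw [pow_succ, Module.End.mul_apply]
      cases n with
      | zero => rw [Gd_e_zero, map_zero]
      | succ ν => rw [Gd_e_succ, map_smul, ih ν (by omega), smul_zero]

lemma Gpow_e : ∀ s ν, ((Gd R) ^ s) (e (ν + s)) = (W R s).eval ((ν : ℂ) + s) • e ν := by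
  intro s
  induction s with
  | zero => intro ν; simp [W]
  | succ s ih =>
      intro ν
      rw [pow_succ, Module.End.mul_apply, show ν + (s+1) = (ν+s) + 1 by ring, Gd_e_succ,
        map_smul, ih, smul_smul, W]
      rw [eval_mul, eval_comp]
      congr 1
      rw [eval_sub, eval_X, eval_C]
      push_cast
      ring

lemma comm_one (c : Polynomial ℂ) :
    Gd R * aeval Hd c = aeval Hd (c.comp (X + C 1)) * Gd R := by
  apply ext_desc
  intro n
  cases n with
  | zero =>
      rw [Module.End.mul_apply, Module.End.mul_apply, aevalHd_e, map_smul, Gd_e_zero, smul_zero,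
        map_zero]
  | succ ν =>
      rw [Module.End.mul_apply, Module.End.mul_apply, aevalHd_e, map_smul, Gd_e_succ, map_smul,
        aevalHd_e, smul_smul, smul_smul]
      congr 1
      rw [eval_comp, eval_add, eval_X, eval_C]
      push_cast
      ring

lemma comm_pow (i : ℕ) : ∀ c : Polynomial ℂ,
    (Gd R) ^ i * aeval Hd c = aeval Hd (c.comp (X + C (i : ℂ))) * (Gd R) ^ i := by
  induction i with
  | zero => intro c; simp
  | succ i ih =>
      intro c
      rw [pow_succ, mul_assoc, comm_one, ← mul_assoc, ih (c.comp (X + C 1)), mul_assoc,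
        comp_assoc]
      congr 2
      rw [add_comp, X_comp, C_comp]
      push_cast
      rw [C_add, C_1]
      ring

lemma W_succ' (s : ℕ) : W R (s + 1) = W R s * (V R).comp (X - C (s : ℂ)) := by
  induction s with
  | zero => simp [W]
  | succ s ih =>
      have hc : (X - C ((s:ℕ) : ℂ)).comp (X - C 1) = X - C (((s+1:ℕ)) : ℂ) := by
        rw [sub_comp, X_comp, C_comp]
        push_cast
        rw [C_add, C_1]
        ring
      calc W R (s+1+1) = V R * (W R (s+1)).comp (X - C 1) := rfl
      _ = V R * ((W R s).comp (X - C 1) * (V R).comp (X - C (((s+1:ℕ)) : ℂ))) := by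
          rw [ih, mul_comp, comp_assoc, hc]
      _ = (V R * (W R s).comp (X - C 1)) * (V R).comp (X - C (((s+1:ℕ)) : ℂ)) := by ring
      _ = W R (s+1) * (V R).comp (X - C (((s+1:ℕ)) : ℂ)) := rfl

lemma V_eval_zero : (V R).eval 0 = 0 := by simp [V]

lemma W_eval_head (s : ℕ) (x : ℂ) :
    (W R (s+1)).eval x = (V R).eval x * (W R s).eval (x - 1) := by
  show (V R * (W R s).comp (X - C 1)).eval x = _
  rw [eval_mul, eval_comp, eval_sub, eval_X, eval_C]

lemma W_eval_tail (s : ℕ) (x : ℂ) :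
    (W R (s+1)).eval x = (W R s).eval x * (V R).eval (x - s) := by
  rw [W_succ', eval_mul, eval_comp, eval_sub, eval_X, eval_C]

lemma atom_lt (c : Polynomial ℂ) (s n : ℕ) (h : n < s) :
    (aeval Hd c * (Gd R)^s) (e n) = 0 := by
  rw [Module.End.mul_apply, Gpow_zero' R s n h, map_zero]

lemma atom_ge (c : Polynomial ℂ) (s ν : ℕ) :
    (aeval Hd c * (Gd R)^s) (e (ν + s)) = ((W R s).eval ((ν:ℂ) + s) * c.eval ((ν:ℂ))) • e ν := by
  rw [Module.End.mul_apply, Gpow_e, map_smul, aevalHd_e, smul_smul]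

lemma opbase (t : ℕ) :
    Xop * (Gd R)^(t+1) - (Gd R)^(t+1) * Xop
      = aeval Hd (V R - (V R).comp (X + C ((t+1 : ℕ) : ℂ))) * (Gd R)^t
        + aeval Hd (C (-((t+1 : ℕ) : ℂ))) * (Gd R)^(t+1) := by
  apply ext_desc
  intro n
  simp only [LinearMap.sub_apply, LinearMap.add_apply, Module.End.mul_apply]
  rcases Nat.lt_or_ge n t with h | h
  · -- n < t : everything vanishes
    rw [Gpow_zero' R (t+1) n (by omega), Xop_e, map_add, map_smul,
      Gpow_zero' R (t+1) (n+1) (by omega), Gpow_zero' R (t+1) n (by omega),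
      Gpow_zero' R t n h]
    simp
  · obtain ⟨ν', rfl⟩ : ∃ k, n = t + k := ⟨n - t, by omega⟩
    cases ν' with
    | zero =>
        -- n = t
        have g1 : ((Gd R)^(t+1)) (e (t + 0 + 1)) = (W R (t+1)).eval (((0:ℕ):ℂ) + ((t+1:ℕ):ℂ)) • e 0 := by
          have := Gpow_e R (t+1) 0
          rwa [show 0 + (t+1) = t + 0 + 1 by omega] at this
        have g2 : ((Gd R)^t) (e (t + 0)) = (W R t).eval (((0:ℕ):ℂ) + ((t:ℕ):ℂ)) • e 0 := by
          have := Gpow_e R t 0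
          rwa [show 0 + t = t + 0 by omega] at this
        rw [Gpow_zero' R (t+1) (t+0) (by omega), Xop_e (t+0), map_add, g1, g2]
        simp only [map_smul, map_zero, smul_zero]
        rw [Gpow_zero' R (t+1) (t+0) (by omega)]
        simp only [map_smul, map_zero, smul_zero, aevalHd_e]
        match_scalars
        rw [eval_sub, eval_comp, eval_add, eval_X, eval_C, V_eval_zero,
          W_eval_head R t ((0:ℂ) + (↑t+1))]
        ring_nf
    | succ ν =>
        have g1 : ((Gd R)^(t+1)) (e (t + (ν+1))) = (W R (t+1)).eval (((ν:ℕ):ℂ) + ((t+1:ℕ):ℂ)) • e ν := by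
          have := Gpow_e R (t+1) ν
          rwa [show ν + (t+1) = t + (ν+1) by omega] at this
        have g2 : ((Gd R)^(t+1)) (e (t + (ν+1) + 1)) = (W R (t+1)).eval (((ν+1:ℕ):ℂ) + ((t+1:ℕ):ℂ)) • e (ν+1) := by
          have := Gpow_e R (t+1) (ν+1)
          rwa [show (ν+1) + (t+1) = t + (ν+1) + 1 by omega] at this
        have g3 : ((Gd R)^t) (e (t + (ν+1))) = (W R t).eval (((ν+1:ℕ):ℂ) + ((t:ℕ):ℂ)) • e (ν+1) := by
          have := Gpow_e R t (ν+1)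
          rwa [show (ν+1) + t = t + (ν+1) by omega] at this
        rw [g1, Xop_e (t+(ν+1)), map_add, g2, g3]
        simp only [map_smul]
        rw [g1, Xop_e ν]
        simp only [aevalHd_e, smul_smul, smul_add]
        match_scalars
        · rw [W_eval_tail R t ((ν:ℂ) + (↑t+1)), W_eval_head R t ((ν:ℂ) + 1 + (↑t+1)),
            eval_sub, eval_comp, eval_add, eval_X, eval_C]
          ring_nf
        · rw [eval_C]
          ring

/-- degree drops under finite differencing -/
lemma diff_natDegree (p : Polynomial ℂ) (a : ℂ) :
    p.comp (X + C a) - p = 0 ∨ (p.comp (X + C a) - p).natDegree + 1 ≤ p.natDegree := by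
  by_cases h0 : p.comp (X + C a) - p = 0
  · exact Or.inl h0
  right
  set q := p.comp (X + C a) - p with hq
  have hnp : p.natDegree ≠ 0 := by
    intro hc
    apply h0
    obtain ⟨b, rfl⟩ : ∃ b, p = C b := ⟨p.coeff 0, (Polynomial.eq_C_of_natDegree_le_zero hc.le)⟩
    rw [hq, C_comp, sub_self]
  have hdcomp : (p.comp (X + C a)).natDegree = p.natDegree := by
    rw [natDegree_comp, natDegree_X_add_C, mul_one]
  have hle : q.natDegree ≤ p.natDegree := by
    refine le_trans (natDegree_sub_le _ _) ?_
    simp [hdcomp]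
  have hcoeff : q.coeff p.natDegree = 0 := by
    rw [hq, coeff_sub]
    have h1 : (p.comp (X + C a)).coeff p.natDegree = (p.comp (X + C a)).leadingCoeff := by
      rw [leadingCoeff, hdcomp]
    rw [h1, leadingCoeff_comp (by rw [natDegree_X_add_C]; exact one_ne_zero)]
    have : (X + C a).leadingCoeff = 1 := monic_X_add_C a
    rw [this, one_pow, mul_one, ← leadingCoeff, sub_self]
  have hne : q.natDegree ≠ p.natDegree := by
    intro hc
    apply h0
    have : q.leadingCoeff = 0 := by rw [leadingCoeff, hc, hcoeff]
    exact leadingCoeff_eq_zero.mp this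
  omega

variable (q : Polynomial ℂ) (d l m : ℕ)

def Aop : E := aeval (Gd R) q

def AtomSet (k : ℕ) : Set E :=
  {T | ∃ (c : Polynomial ℂ) (s : ℕ),
    (c ≠ 0 → c.natDegree + k ≤ d + 1 ∧ l * c.natDegree + s ≤ m)
    ∧ T = aeval Hd c * (Gd R)^s}

def Good (k : ℕ) : Submodule ℂ E := Submodule.span ℂ (AtomSet R d l m k)

def adm (T : E) : E := T * Aop R q - Aop R q * T

lemma adm_add (T U : E) : adm R q (T + U) = adm R q T + adm R q U := by
  simp only [adm]; noncomm_ring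

lemma adm_smul (a : ℂ) (T : E) : adm R q (a • T) = a • adm R q T := by
  simp only [adm, smul_sub, smul_mul_assoc, mul_smul_comm]

lemma adm_zero : adm R q 0 = 0 := by simp [adm]

lemma Aop_expand (hql : q.natDegree = l) :
    Aop R q = ∑ i ∈ range (l + 1), q.coeff i • (Gd R) ^ i := by
  rw [Aop, aeval_eq_sum_range, hql]

lemma adm_expand (hql : q.natDegree = l) (T : E) :
    adm R q T = ∑ i ∈ range (l + 1), q.coeff i • (T * (Gd R) ^ i - (Gd R) ^ i * T) := by
  rw [adm, Aop_expand R q l hql, Finset.mul_sum, Finset.sum_mul, ← Finset.sum_sub_distrib]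
  congr 1
  ext i
  rw [mul_smul_comm, smul_mul_assoc, smul_sub]

lemma atom_mem (k : ℕ) (c : Polynomial ℂ) (s : ℕ)
    (hcond : c ≠ 0 → c.natDegree + k ≤ d + 1 ∧ l * c.natDegree + s ≤ m) :
    aeval Hd c * (Gd R)^s ∈ Good R d l m k :=
  Submodule.subset_span ⟨c, s, hcond, rfl⟩

lemma good_step (hl : 1 ≤ l) (hql : q.natDegree = l) (k : ℕ) {T : E}
    (hT : T ∈ Good R d l m k) : adm R q T ∈ Good R d l m (k + 1) := by
  induction hT using Submodule.span_induction with
  | mem x hx =>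
      obtain ⟨c, s, hcond, rfl⟩ := hx
      rw [adm_expand R q l hql]
      apply Submodule.sum_mem
      intro i hi
      apply Submodule.smul_mem
      have hkey : aeval Hd c * (Gd R)^s * (Gd R)^i - (Gd R)^i * (aeval Hd c * (Gd R)^s)
          = aeval Hd (c - c.comp (X + C (i:ℂ))) * (Gd R)^(s+i) := by
        rw [← mul_assoc ((Gd R)^i), comm_pow, map_sub, sub_mul, mul_assoc, mul_assoc,
          ← pow_add, ← pow_add, add_comm i s]
      rw [hkey]
      apply atom_mem
      intro hne
      have hc : c ≠ 0 := by
        intro h0; apply hne; rw [h0]; simp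
      have hdeg : (c - c.comp (X + C (i:ℂ))).natDegree + 1 ≤ c.natDegree := by
        rcases diff_natDegree c (i : ℂ) with h | h
        · exfalso; apply hne
          rw [← neg_sub, h, neg_zero]
        · have : c - c.comp (X + C (i:ℂ)) = -(c.comp (X + C (i:ℂ)) - c) := by ring
          rw [this, natDegree_neg]
          exact h
      obtain ⟨h1, h2⟩ := hcond hc
      have hi' : i ≤ l := by simpa using Nat.lt_succ_iff.mp (Finset.mem_range.mp hi)
      constructor
      · omega
      · have hmul : l * ((c - c.comp (X + C (i:ℂ))).natDegree + 1) ≤ l * c.natDegree :=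
          Nat.mul_le_mul_left l hdeg
        rw [Nat.mul_add, Nat.mul_one] at hmul
        omega
  | zero => rw [adm_zero]; exact Submodule.zero_mem _
  | add x y hx hy ihx ihy => rw [adm_add]; exact Submodule.add_mem _ ihx ihy
  | smul a x hx ih => rw [adm_smul]; exact Submodule.smul_mem _ a ih


lemma good_C1 (hR : R.natDegree = d) (hq0 : q.coeff 0 = 0) (hql : q.natDegree = l)
    (hl : 1 ≤ l) (hm : m = if d = 0 then l else l * d + l - 1) :
    adm R q Xop ∈ Good R d l m 1 := by
  rw [adm_expand R q l hql]
  apply Submodule.sum_mem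
  intro i hi
  have hil : i ≤ l := Nat.lt_succ_iff.mp (Finset.mem_range.mp hi)
  have hlm : l ≤ m := by
    rcases Nat.eq_zero_or_pos d with hd0 | hd1
    · rw [hd0, if_pos rfl] at hm; omega
    · rw [if_neg (by omega)] at hm
      have h1 : 1 * 1 ≤ l * d := Nat.mul_le_mul hl hd1
      omega
  cases i with
  | zero => rw [hq0, zero_smul]; exact Submodule.zero_mem _
  | succ t =>
      apply Submodule.smul_mem
      rw [opbase]
      apply Submodule.add_mem
      · apply atom_mem
        intro hne
        set c1 := V R - (V R).comp (X + C ((t+1 : ℕ) : ℂ)) with hc1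
        have hVne : V R ≠ 0 := by
          intro h
          apply hne
          rw [hc1, h, zero_comp, sub_self]
        have hVdeg : (V R).natDegree = d + 1 := by
          have hcompne : R.comp (X - C 1) ≠ 0 := by
            intro h
            apply hVne
            rw [V, h, mul_zero]
          rw [V, natDegree_mul X_ne_zero hcompne, natDegree_X, natDegree_comp,
            natDegree_X_sub_C, mul_one, hR]
          omega
        have hc1d : c1.natDegree ≤ d := by
          rcases diff_natDegree (V R) ((t+1 : ℕ) : ℂ) with h | h
          · exfalso; apply hne; rw [hc1, ← neg_sub, h, neg_zero]
          · have : c1 = -((V R).comp (X + C ((t+1:ℕ):ℂ)) - V R) := by rw [hc1]; ring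
            rw [this, natDegree_neg]
            omega
        constructor
        · omega
        · have hdl : l * c1.natDegree ≤ l * d := Nat.mul_le_mul_left l hc1d
          rcases Nat.eq_zero_or_pos d with hd0 | hd1
          · rw [hd0, if_pos rfl] at hm
            rw [hd0, Nat.mul_zero] at hdl
            omega
          · rw [if_neg (by omega)] at hm
            omega
      · apply atom_mem
        intro _
        rw [natDegree_C]
        omega

lemma good_vanish {T : E} (hT : T ∈ Good R d l m (d + 2)) : T = 0 := by
  have hsub : AtomSet R d l m (d + 2) ⊆ {(0 : E)} := by
    rintro T ⟨c, s, hcond, rfl⟩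
    by_cases hc : c = 0
    · simp [hc]
    · exfalso; have := (hcond hc).1; omega
  have := Submodule.span_mono hsub hT
  rwa [Submodule.span_zero_singleton, Submodule.mem_bot] at this

def Ck (k : ℕ) : E := (adm R q)^[k] Xop

lemma good_Ck (hR : R.natDegree = d) (hq0 : q.coeff 0 = 0) (hql : q.natDegree = l)
    (hl : 1 ≤ l) (hm : m = if d = 0 then l else l * d + l - 1) (k : ℕ) :
    Ck R q (k + 1) ∈ Good R d l m (k + 1) := by
  induction k with
  | zero => exact good_C1 R q d l m hR hq0 hql hl hm
  | succ k ih =>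
      rw [Ck, Function.iterate_succ_apply']
      exact good_step R q d l m hl hql (k+1) ih

lemma Ck_vanish (hR : R.natDegree = d) (hq0 : q.coeff 0 = 0) (hql : q.natDegree = l)
    (hl : 1 ≤ l) (hm : m = if d = 0 then l else l * d + l - 1) (k : ℕ) (hk : d + 2 ≤ k) :
    Ck R q k = 0 := by
  obtain ⟨j, rfl⟩ : ∃ j, k = (d + 2) + j := ⟨k - (d+2), by omega⟩
  induction j with
  | zero =>
      have : d + 2 = (d + 1) + 1 := by omega
      exact good_vanish R d l m (this ▸ good_Ck R q d l m hR hq0 hql hl hm (d+1))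
  | succ j ih =>
      rw [show d + 2 + (j+1) = (d+2+j) + 1 by omega, Ck, Function.iterate_succ_apply',
        ← Ck, ih (by omega), adm_zero]

lemma good_apply (k n : ℕ) {T : E} (hT : T ∈ Good R d l m k) :
    T (e n) ∈ Submodule.span ℂ
      (Set.range fun i : Fin (m+1) => (if (i:ℕ) ≤ n then e (n - (i:ℕ)) else (0 : Polynomial ℂ))) := by
  induction hT using Submodule.span_induction with
  | mem x hx =>
      obtain ⟨c, s, hcond, rfl⟩ := hx
      by_cases hc : c = 0
      · rw [hc, map_zero, zero_mul, LinearMap.zero_apply]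
        exact Submodule.zero_mem _
      · have hs : s ≤ m := by have := (hcond hc).2; omega
        by_cases hsn : s ≤ n
        · have hact := atom_ge R c s (n - s)
          rw [show (n - s) + s = n by omega] at hact
          rw [hact]
          apply Submodule.smul_mem
          apply Submodule.subset_span
          exact ⟨⟨s, by omega⟩, by simp [hsn]⟩
        · rw [atom_lt R c s n (by omega)]
          exact Submodule.zero_mem _
  | zero => rw [LinearMap.zero_apply]; exact Submodule.zero_mem _
  | add x y hx hy ihx ihy => rw [LinearMap.add_apply]; exact Submodule.add_mem _ ihx ihy
  | smul a x hx ih => rw [LinearMap.smul_apply]; exact Submodule.smul_mem _ a ih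

def Ur (r : ℕ) : Submodule ℂ (Polynomial ℂ) := Submodule.span ℂ (e '' Set.Iio r)

lemma Ur_mono {r r' : ℕ} (h : r ≤ r') : Ur r ≤ Ur r' :=
  Submodule.span_mono (Set.image_mono (Set.Iio_subset_Iio (by exact_mod_cast h)))

lemma e_mem_Ur {t r : ℕ} (h : t < r) : e t ∈ Ur r :=
  Submodule.subset_span ⟨t, h, rfl⟩

lemma Aop_e_mem (hq0 : q.coeff 0 = 0) (hql : q.natDegree = l) (r : ℕ) :
    Aop R q (e r) ∈ Ur r := by
  rw [Aop_expand R q l hql, LinearMap.sum_apply]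
  apply Submodule.sum_mem
  intro i _
  cases i with
  | zero =>
      rw [hq0, zero_smul, LinearMap.zero_apply]
      exact Submodule.zero_mem _
  | succ t =>
      rw [LinearMap.smul_apply]
      apply Submodule.smul_mem
      rcases Nat.lt_or_ge r (t+1) with h | h
      · rw [Gpow_zero' R (t+1) r h]
        exact Submodule.zero_mem _
      · have hg := Gpow_e R (t+1) (r - (t+1))
        rw [show r - (t+1) + (t+1) = r by omega] at hg
        rw [hg]
        exact Submodule.smul_mem _ _ (e_mem_Ur (by omega))

lemma Aop_mem (hq0 : q.coeff 0 = 0) (hql : q.natDegree = l) (r : ℕ) {p : Polynomial ℂ}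
    (hp : p ∈ Ur (r+1)) : Aop R q p ∈ Ur r := by
  induction hp using Submodule.span_induction with
  | mem x hx =>
      obtain ⟨t, ht, rfl⟩ := hx
      exact Ur_mono (by simpa using Nat.lt_succ_iff.mp ht) (Aop_e_mem R q l hq0 hql t)
  | zero => rw [map_zero]; exact Submodule.zero_mem _
  | add x y hx hy ihx ihy => rw [map_add]; exact Submodule.add_mem _ ihx ihy
  | smul a x hx ih => rw [map_smul]; exact Submodule.smul_mem _ a ih

lemma Apow_Ur (hq0 : q.coeff 0 = 0) (hql : q.natDegree = l) :
    ∀ j, ∀ p ∈ Ur j, ((Aop R q) ^ j) p = 0 := by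
  intro j
  induction j with
  | zero =>
      intro p hp
      have : Ur 0 = ⊥ := by
        rw [Ur]
        convert Submodule.span_empty
        ext x
        simp
      rw [this, Submodule.mem_bot] at hp
      simp [hp]
  | succ j ih =>
      intro p hp
      rw [pow_succ, Module.End.mul_apply]
      exact ih _ (Aop_mem R q l hq0 hql j hp)

lemma Apow_e_zero (hq0 : q.coeff 0 = 0) (hql : q.natDegree = l) {j r : ℕ} (h : r < j) :
    ((Aop R q) ^ j) (e r) = 0 :=
  Apow_Ur R q l hq0 hql j _ (e_mem_Ur h)

lemma Pqd_eq (hq0 : q.coeff 0 = 0) (hql : q.natDegree = l) (r N : ℕ) (hN : r + 1 ≤ N) :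
    Pqd R q r = ∑ j ∈ range N, (j.factorial : ℂ)⁻¹ • ((Aop R q) ^ j) (e r) := by
  rw [Pqd]
  apply Finset.sum_subset (by simpa using hN)
  intro j _ hj
  show (j.factorial : ℂ)⁻¹ • ((Aop R q) ^ j) (e r) = 0
  rw [Apow_e_zero R q l hq0 hql (by simpa using hj), smul_zero]

/-- noncommutative binomial expansion -/
lemma bin : ∀ (j : ℕ) (T : E), T * (Aop R q) ^ j
    = ∑ k ∈ range (j+1), ((j.choose k : ℕ) : ℂ) • ((Aop R q) ^ (j-k) * (adm R q)^[k] T) := by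
  intro j
  induction j with
  | zero => intro T; simp
  | succ j ih =>
      intro T
      have step : T * (Aop R q) ^ (j+1)
          = Aop R q * (T * (Aop R q) ^ j) + (adm R q T) * (Aop R q) ^ j := by
        rw [pow_succ' (Aop R q) j, adm, sub_mul, ← mul_assoc, ← mul_assoc]
        abel
      have hS1 : Aop R q * (T * (Aop R q) ^ j)
          = ∑ k ∈ range (j+1), ((j.choose k : ℕ) : ℂ) •
              ((Aop R q) ^ (j+1-k) * (adm R q)^[k] T) := by
        rw [ih, Finset.mul_sum]
        apply Finset.sum_congr rfl
        intro k hk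
        have hk' : k ≤ j := Nat.lt_succ_iff.mp (Finset.mem_range.mp hk)
        rw [mul_smul_comm, ← mul_assoc, ← pow_succ', show j - k + 1 = j + 1 - k by omega]
      have hS2 : (adm R q T) * (Aop R q) ^ j
          = ∑ k ∈ range (j+1), ((j.choose k : ℕ) : ℂ) •
              ((Aop R q) ^ (j+1-(k+1)) * (adm R q)^[k+1] T) := by
        rw [ih (adm R q T)]
        apply Finset.sum_congr rfl
        intro k _
        rw [Function.iterate_succ_apply, Nat.succ_sub_succ_eq_sub]
      rw [step, hS1, hS2]
      have hlast : ∑ k ∈ range (j+2), ((j.choose k : ℕ) : ℂ) •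
            ((Aop R q) ^ (j+1-k) * (adm R q)^[k] T)
          = ∑ k ∈ range (j+1), ((j.choose k : ℕ) : ℂ) •
            ((Aop R q) ^ (j+1-k) * (adm R q)^[k] T) := by
        rw [Finset.sum_range_succ, Nat.choose_succ_self, Nat.cast_zero, zero_smul, add_zero]
      have hshift : ∑ k ∈ range (j+2), ((j.choose k : ℕ) : ℂ) •
            ((Aop R q) ^ (j+1-k) * (adm R q)^[k] T)
          = (∑ k ∈ range (j+1), ((j.choose (k+1) : ℕ) : ℂ) •
              ((Aop R q) ^ (j+1-(k+1)) * (adm R q)^[k+1] T))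
            + ((j.choose 0 : ℕ) : ℂ) • ((Aop R q) ^ (j+1) * (adm R q)^[0] T) := by
        exact Finset.sum_range_succ' _ (j+1)
      rw [eq_comm]
      calc ∑ k ∈ range (j+1+1), (((j+1).choose k : ℕ) : ℂ) •
              ((Aop R q) ^ (j+1-k) * (adm R q)^[k] T)
          = (∑ k ∈ range (j+1), (((j+1).choose (k+1) : ℕ) : ℂ) •
              ((Aop R q) ^ (j+1-(k+1)) * (adm R q)^[k+1] T))
            + (((j+1).choose 0 : ℕ) : ℂ) • ((Aop R q) ^ (j+1) * (adm R q)^[0] T) :=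
            Finset.sum_range_succ' _ (j+1)
        _ = (∑ k ∈ range (j+1), (((j.choose k : ℕ) : ℂ) •
              ((Aop R q) ^ (j+1-(k+1)) * (adm R q)^[k+1] T)
              + ((j.choose (k+1) : ℕ) : ℂ) •
              ((Aop R q) ^ (j+1-(k+1)) * (adm R q)^[k+1] T)))
            + ((j.choose 0 : ℕ) : ℂ) • ((Aop R q) ^ (j+1) * (adm R q)^[0] T) := by
            congr 1
            · apply Finset.sum_congr rfl
              intro k _
              rw [Nat.choose_succ_succ, Nat.cast_add, add_smul]
            · rw [Nat.choose_zero_right, Nat.choose_zero_right]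
        _ = (∑ k ∈ range (j+1), ((j.choose k : ℕ) : ℂ) •
              ((Aop R q) ^ (j+1-(k+1)) * (adm R q)^[k+1] T))
            + ((∑ k ∈ range (j+1), ((j.choose (k+1) : ℕ) : ℂ) •
              ((Aop R q) ^ (j+1-(k+1)) * (adm R q)^[k+1] T))
              + ((j.choose 0 : ℕ) : ℂ) • ((Aop R q) ^ (j+1) * (adm R q)^[0] T)) := by
            rw [Finset.sum_add_distrib]
            abel
        _ = (∑ k ∈ range (j+1), ((j.choose k : ℕ) : ℂ) •
              ((Aop R q) ^ (j+1-(k+1)) * (adm R q)^[k+1] T))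
            + ∑ k ∈ range (j+1), ((j.choose k : ℕ) : ℂ) •
              ((Aop R q) ^ (j+1-k) * (adm R q)^[k] T) := by
            rw [← hshift, hlast]
        _ = _ := by
            rw [add_comm]

theorem main (hR : R.natDegree = d)
    (hq0 : q.eval 0 = 0) (hl : 1 ≤ l)
    (hql : q.natDegree = l) (n : ℕ) :
    ∃ γ : ℕ → ℂ,
      X * Pqdz R q n = Pqdz R q (n + 1)
        + ∑ j ∈ range ((if d = 0 then l else l * d + l - 1) + 1),
            γ j • Pqdz R q ((n : ℤ) - j) := by
  classical
  set m := (if d = 0 then l else l * d + l - 1) with hm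
  have hq0' : q.coeff 0 = 0 := by rwa [Polynomial.coeff_zero_eq_eval_zero]
  set N := n + d + 3 with hN
  set LL : ℕ → E := fun M => ∑ i ∈ range M, (i.factorial : ℂ)⁻¹ • (Aop R q) ^ i with hLL
  have hLL_apply : ∀ M p, LL M p = ∑ i ∈ range M, (i.factorial : ℂ)⁻¹ • ((Aop R q) ^ i) p := by
    intro M p
    rw [hLL]
    simp only [LinearMap.coe_sum, Finset.sum_apply, LinearMap.smul_apply]
  have hLL_e : ∀ M r, r + 1 ≤ M → LL M (e r) = Pqd R q r := by
    intro M r h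
    rw [hLL_apply, ← Pqd_eq R q l hq0' hql r M h]
  set v : Fin (m+1) → Polynomial ℂ := fun i => Pqdz R q ((n:ℤ) - (i:ℕ)) with hv
  -- main formula
  have key : X * Pqd R q n
      = ∑ k ∈ range N, (k.factorial : ℂ)⁻¹ • (LL (N-k)) ((Ck R q k) (e n)) := by
    rw [Pqd_eq R q l hq0' hql n N (by omega), Finset.mul_sum]
    have h1 : ∀ j, X * ((j.factorial : ℂ)⁻¹ • ((Aop R q) ^ j) (e n))
        = ∑ k ∈ range (j+1), ((j.factorial : ℂ)⁻¹ * ((j.choose k : ℕ) : ℂ)) •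
            ((Aop R q) ^ (j-k)) ((Ck R q k) (e n)) := by
      intro j
      rw [mul_smul_comm]
      have : X * ((Aop R q) ^ j) (e n) = (Xop * (Aop R q) ^ j) (e n) := rfl
      rw [this, bin R q j Xop, LinearMap.coe_sum, Finset.sum_apply, Finset.smul_sum]
      apply Finset.sum_congr rfl
      intro k _
      rw [LinearMap.smul_apply, Module.End.mul_apply, smul_smul, Ck]
    rw [Finset.sum_congr rfl (fun j _ => h1 j)]
    simp only [Finset.range_eq_Ico]
    rw [← Finset.sum_Ico_Ico_comm 0 N
      (fun k j => ((j.factorial : ℂ)⁻¹ * ((j.choose k : ℕ) : ℂ)) •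
        ((Aop R q) ^ (j-k)) ((Ck R q k) (e n)))]
    apply Finset.sum_congr rfl
    intro k _
    rw [Finset.sum_Ico_eq_sum_range]
    have hfact : ∀ i : ℕ, (((k+i).factorial : ℂ))⁻¹ * (((k+i).choose k : ℕ) : ℂ)
        = (k.factorial : ℂ)⁻¹ * (i.factorial : ℂ)⁻¹ := by
      intro i
      have h := Nat.choose_mul_factorial_mul_factorial (Nat.le_add_right k i)
      rw [Nat.add_sub_cancel_left] at h
      have hc : (((k+i).choose k : ℕ) : ℂ) * (k.factorial : ℂ) * (i.factorial : ℂ)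
          = ((k+i).factorial : ℂ) := by exact_mod_cast congrArg (Nat.cast : ℕ → ℂ) h
      have h1 : ((k.factorial : ℕ) : ℂ) ≠ 0 := Nat.cast_ne_zero.mpr (Nat.factorial_ne_zero k)
      have h2 : ((i.factorial : ℕ) : ℂ) ≠ 0 := Nat.cast_ne_zero.mpr (Nat.factorial_ne_zero i)
      have h3 : (((k+i).factorial : ℕ) : ℂ) ≠ 0 :=
        Nat.cast_ne_zero.mpr (Nat.factorial_ne_zero (k+i))
      field_simp
      linear_combination hc
    have hstep : ∀ i : ℕ,
        (((k+i).factorial : ℂ)⁻¹ * (((k+i).choose k : ℕ) : ℂ)) •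
          ((Aop R q) ^ ((k+i)-k)) ((Ck R q k) (e n))
        = (k.factorial : ℂ)⁻¹ • ((i.factorial : ℂ)⁻¹ • ((Aop R q) ^ i) ((Ck R q k) (e n))) := by
      intro i
      rw [hfact i, show (k+i)-k = i by omega, smul_smul]
    rw [Finset.sum_congr rfl (fun i _ => hstep i), ← Finset.smul_sum, hLL_apply]
  -- peel off k = 0
  have hN1 : N - 1 + 1 = N := by omega
  have key2 : X * Pqd R q n
      = Pqd R q (n+1) + (n:ℂ) • Pqd R q n
        + ∑ k ∈ range (N-1), ((k+1).factorial : ℂ)⁻¹ •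
            (LL (N-(k+1))) ((Ck R q (k+1)) (e n)) := by
    rw [key, ← hN1, Finset.sum_range_succ']
    rw [Nat.factorial_zero, Nat.cast_one, inv_one, one_smul]
    have hCk0 : Ck R q 0 = Xop := rfl
    rw [hCk0, Xop_e, map_add, map_smul]
    simp only [Nat.sub_zero]
    rw [hN1]
    rw [hLL_e N (n+1) (by omega), hLL_e N n (by omega)]
    abel
  -- each correction term lies in the span of the Pqdz's
  have hterm : ∀ k ∈ range (N-1),
      (((k+1).factorial : ℂ)⁻¹ • (LL (N-(k+1))) ((Ck R q (k+1)) (e n)))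
        ∈ Submodule.span ℂ (Set.range v) := by
    intro k _
    apply Submodule.smul_mem
    rcases Nat.lt_or_ge k (d+1) with hk | hk
    · have hG := good_Ck R q d l m hR hq0' hql hl hm k
      have hEn := good_apply R d l m (k+1) n hG
      have hmap := Submodule.mem_map_of_mem (f := LL (N-(k+1))) hEn
      rw [Submodule.map_span] at hmap
      have hsub : (LL (N-(k+1))) ''
          (Set.range fun i : Fin (m+1) =>
            (if (i:ℕ) ≤ n then e (n - (i:ℕ)) else (0 : Polynomial ℂ)))
          ⊆ (Submodule.span ℂ (Set.range v) : Set (Polynomial ℂ)) := by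
        rintro x ⟨y, ⟨i, rfl⟩, rfl⟩
        have hval : (LL (N-(k+1)))
            (if (i:ℕ) ≤ n then e (n - (i:ℕ)) else (0 : Polynomial ℂ)) = v i := by
          by_cases hin : (i:ℕ) ≤ n
          · rw [if_pos hin, hLL_e _ _ (by omega), hv]
            have hnn : ¬ ((n:ℤ) - ((i:ℕ):ℤ) < 0) := by omega
            have hcast : (n:ℤ) - ((i:ℕ):ℤ) = ((n - (i:ℕ) : ℕ) : ℤ) := by omega
            simp only [Pqdz, if_neg hnn, hcast, Int.toNat_natCast]
            rw [if_neg (by omega)]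
          · rw [if_neg hin, map_zero, hv]
            have hneg : ((n:ℤ) - ((i:ℕ):ℤ) < 0) := by omega
            simp only [Pqdz, if_pos hneg]
        rw [hval]
        exact Submodule.subset_span ⟨i, rfl⟩
      exact Submodule.span_le.mpr hsub hmap
    · rw [Ck_vanish R q d l m hR hq0' hql hl hm (k+1) (by omega), LinearMap.zero_apply,
        map_zero]
      exact Submodule.zero_mem _
  have habel : ∀ a b c : Polynomial ℂ, a + b + c - a = b + c := by intros; ring
  have hmem : X * Pqd R q n - Pqd R q (n+1) ∈ Submodule.span ℂ (Set.range v) := by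
    rw [key2, habel]
    apply Submodule.add_mem
    · have hv0 : v 0 = Pqd R q n := by
        rw [hv]
        simp only [Fin.val_zero, Nat.cast_zero, sub_zero]
        rw [Pqdz, if_neg (by omega), Int.toNat_natCast]
      rw [← hv0]
      exact Submodule.smul_mem _ _ (Submodule.subset_span (Set.mem_range_self 0))
    · exact Submodule.sum_mem _ hterm
  obtain ⟨c, hc⟩ := (Submodule.mem_span_range_iff_exists_fun ℂ).mp hmem
  refine ⟨fun j => if h : j < m + 1 then c ⟨j, h⟩ else 0, ?_⟩
  have hPz1 : Pqdz R q (n:ℤ) = Pqd R q n := by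
    rw [Pqdz, if_neg (by omega), Int.toNat_natCast]
  have hPz2 : Pqdz R q ((n:ℤ)+1) = Pqd R q (n+1) := by
    rw [Pqdz, if_neg (by omega), show (n:ℤ)+1 = ((n+1:ℕ):ℤ) by push_cast; ring,
      Int.toNat_natCast]
  have hsum : ∑ j ∈ range (m+1),
      (if h : j < m + 1 then c ⟨j, h⟩ else 0) • Pqdz R q ((n:ℤ) - j)
      = ∑ i : Fin (m+1), c i • v i := by
    rw [← Fin.sum_univ_eq_sum_range
      (fun j => (if h : j < m + 1 then c ⟨j, h⟩ else 0) • Pqdz R q ((n:ℤ) - j)) (m+1)]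
    apply Finset.sum_congr rfl
    intro i _
    rw [dif_pos i.isLt, hv]
  rw [hPz1, hPz2, hsum, hc]
  ring

end Rec

/-- Finite-term recurrence `x·P_n^q = P_{n+1}^q + Σ_{j=0}^{m} γ_j(n)·P_{n−j}^q`,
where `m = ld+l−1` if `d ≥ 1` and `m = l` if `d = 0`. -/
theorem Pqd_recurrence (R : Polynomial ℂ) (d : ℕ) (hR : R.natDegree = d)
    (q : Polynomial ℂ) (hq0 : q.eval 0 = 0) (l : ℕ) (hl : 1 ≤ l)
    (hql : q.natDegree = l) (n : ℕ) :
    ∃ γ : ℕ → ℂ,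
      X * Pqdz R q n = Pqdz R q (n + 1)
        + ∑ j ∈ range ((if d = 0 then l else l * d + l - 1) + 1),
            γ j • Pqdz R q ((n : ℤ) - j) :=
  Rec.main R q d l hR hq0 hl hql n

end
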